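/- Fix an integer k ≥ 1 and integers j_1 > j_2 > … > j_k > 0. Define φ(x_1,…,x_k) = 2^{k/2} · det( sin(π j_p x_q) )_{1≤p,q≤k} and λ = 1/( π^{2k} j_1² j_2² ⋯ j_k² ). Then for all real numbers 0 ≤ x_1 ≤ x_2 ≤ … ≤ x_k ≤ 1, the iterated integral ∫_{y_1=0}^{x_1} ∫_{y_2=x_1}^{x_2} ⋯ ∫_{y_k=x_{k−1}}^{x_k} ∫_{y_{k+1}=x_k}^{1} [ ∫_{t_1=y_1}^{y_2} ∫_{t_2=y_2}^{y_3} ⋯ ∫_{t_k=y_k}^{y_{k+1}} φ(t_1,…,t_k) dt_k ⋯ dt_1 ] dy_{k+1} ⋯ dy_1 equals λ · φ(x_1,…,x_k). -/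

import Mathlib

open MeasureTheory

/-- The eigenfunction `φ_{j_1,…,j_k}(x) = 2^{k/2} det( sin(π j_p x_q) )_{p,q}`
of the `(2k+1)`-strip transfer operator. -/
noncomputable def phiSin (k : ℕ) (jj : Fin k → ℕ) (x : Fin k → ℝ) : ℝ :=
  Real.sqrt 2 ^ k *
    Matrix.det (Matrix.of fun p q : Fin k => Real.sin (Real.pi * (jj p : ℝ) * x q))

section Helpers


lemma box_prod {n : ℕ} (s : Fin n → Set ℝ) (hs : ∀ i, MeasurableSet (s i))
    (g : Fin n → ℝ → ℝ) :
    ∫ y in Set.univ.pi s, ∏ i, g i (y i) = ∏ i, ∫ t in s i, g i t := by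
  rw [← integral_indicator (MeasurableSet.univ_pi hs)]
  have h1 : ∀ y : Fin n → ℝ, (Set.univ.pi s).indicator (fun y : Fin n → ℝ => ∏ i, g i (y i)) y
      = ∏ i, (s i).indicator (g i) (y i) := by
    intro y
    by_cases h : y ∈ Set.univ.pi s
    · rw [Set.indicator_of_mem h]
      exact Finset.prod_congr rfl fun i _ =>
        (Set.indicator_of_mem (h i (Set.mem_univ i)) _).symm
    · rw [Set.indicator_of_notMem h]
      rw [Set.mem_univ_pi] at h; push_neg at h
      obtain ⟨i, hi⟩ := h
      exact (Finset.prod_eq_zero (Finset.mem_univ i) (Set.indicator_of_notMem hi _)).symm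
  simp_rw [h1]
  rw [MeasureTheory.volume_pi, MeasureTheory.integral_fintype_prod_eq_prod fun i => (s i).indicator (g i)]
  exact Finset.prod_congr rfl fun i _ => integral_indicator (hs i)

lemma box_det {n : ℕ} (a b : Fin n → ℝ) (f : Fin n → ℝ → Fin n → ℝ)
    (hf : ∀ q p, Continuous fun t => f q t p) :
    ∫ y in Set.univ.pi fun q => Set.Icc (a q) (b q),
        Matrix.det (Matrix.of fun p q => f q (y q) p)
      = Matrix.det (Matrix.of fun p q => ∫ t in Set.Icc (a q) (b q), f q t p) := by
  simp only [Matrix.det_apply', Matrix.of_apply]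
  have hint : ∀ σ : Equiv.Perm (Fin n), IntegrableOn
      (fun y : Fin n → ℝ => (Equiv.Perm.sign σ : ℝ) * ∏ i, f i (y i) (σ i))
      (Set.univ.pi fun q => Set.Icc (a q) (b q)) := by
    intro σ
    apply ContinuousOn.integrableOn_compact (isCompact_univ_pi fun i => isCompact_Icc)
    exact (continuous_const.mul (continuous_finset_prod _ fun i _ =>
      (hf i (σ i)).comp (continuous_apply i))).continuousOn
  rw [integral_finset_sum _ fun σ _ => hint σ]
  refine Finset.sum_congr rfl fun σ _ => ?_
  rw [integral_const_mul, box_prod _ (fun i => measurableSet_Icc) (fun i t => f i t (σ i))]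

lemma det_diff_cols {k : ℕ} (M : Matrix (Fin (k+1)) (Fin (k+1)) ℝ)
    (hM : ∀ q, M 0 q = 1) :
    Matrix.det M = (-1:ℝ)^k * Matrix.det (Matrix.of fun p q : Fin k =>
      M p.succ q.castSucc - M p.succ q.succ) := by
  classical
  set T : Matrix (Fin (k+1)) (Fin (k+1)) ℝ :=
    Matrix.of (fun s q => if s = q then (1:ℝ) else if (s:ℕ) = (q:ℕ)+1 then -1 else 0) with hTdef
  have hTtri : T.BlockTriangular OrderDual.toDual := by
    intro i j hij
    have hij' : i < j := hij
    have h1 : i ≠ j := ne_of_lt hij'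
    have h2 : (i:ℕ) ≠ (j:ℕ)+1 := by have := (Fin.lt_def.mp hij'); omega
    simp [hTdef, h1, h2]
  have hTdet : T.det = 1 := by
    rw [Matrix.det_of_lowerTriangular T hTtri]
    apply Finset.prod_eq_one
    intro i _
    simp [hTdef]
  have hMT : ∀ (p q : Fin (k+1)), (M * T) p q
      = M p q - (if h : (q:ℕ) < k then M p ⟨(q:ℕ)+1, by omega⟩ else 0) := by
    intro p q
    rw [Matrix.mul_apply]
    have hsplit : ∀ s : Fin (k+1), M p s * T s q
        = (if s = q then M p s else 0) + (if (s:ℕ) = (q:ℕ)+1 then -(M p s) else 0) := by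
      intro s
      by_cases h1 : s = q
      · subst h1
        simp [hTdef]
      · by_cases h2 : (s:ℕ) = (q:ℕ)+1
        · simp [hTdef, h1, h2]
        · simp [hTdef, h1, h2]
    simp_rw [hsplit]
    rw [Finset.sum_add_distrib, Finset.sum_ite_eq' Finset.univ q (fun s => M p s)]
    simp only [Finset.mem_univ, if_true]
    congr 1
    by_cases hq : (q:ℕ) < k
    · have hcond : ∀ s : Fin (k+1), ((s:ℕ) = (q:ℕ)+1) ↔ s = ⟨(q:ℕ)+1, by omega⟩ := by
        intro s; rw [Fin.ext_iff]
      simp_rw [hcond]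
      rw [Finset.sum_ite_eq' Finset.univ _ (fun s => -(M p s))]
      simp [hq]
    · rw [dif_neg hq, neg_zero]
      apply Finset.sum_eq_zero
      intro s _
      have : ¬ ((s:ℕ) = (q:ℕ)+1) := by have := s.isLt; have := q.isLt; omega
      simp [this]
  have hdet : Matrix.det M = Matrix.det (M * T) := by
    rw [Matrix.det_mul, hTdet, mul_one]
  rw [hdet, Matrix.det_succ_row_zero]
  rw [Finset.sum_eq_single (Fin.last k)]
  · have hlast : (M * T) 0 (Fin.last k) = 1 := by
      rw [hMT]; simp [hM]
    have hsub : (M * T).submatrix Fin.succ (Fin.last k).succAbove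
        = Matrix.of (fun p q : Fin k => M p.succ q.castSucc - M p.succ q.succ) := by
      ext p q
      rw [Matrix.submatrix_apply, Fin.succAbove_last, hMT]
      have hq : ((q.castSucc : Fin (k+1)) : ℕ) < k := by simp [q.isLt]
      rw [dif_pos hq]
      simp only [Matrix.of_apply]
      congr 2
    rw [hlast, mul_one, Fin.val_last, hsub]
  · intro j _ hj
    have hjk : (j:ℕ) < k := by
      have h1 := j.isLt
      have h2 : (j:ℕ) ≠ k := fun h => hj (by ext; simp [h])
      omega
    have : (M * T) 0 j = 0 := by
      rw [hMT, dif_pos hjk, hM, hM, sub_self]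
    rw [this, mul_zero, zero_mul]
  · intro h
    exact absurd (Finset.mem_univ _) h

lemma det_accum {n : ℕ} (M : Matrix (Fin n) (Fin n) ℝ) :
    Matrix.det M = Matrix.det (Matrix.of fun p q : Fin n =>
      ∑ s : Fin n, if s ≤ q then M p s else 0) := by
  classical
  set L : Matrix (Fin n) (Fin n) ℝ :=
    Matrix.of (fun s q => if s ≤ q then (1:ℝ) else 0) with hLdef
  have hLtri : L.BlockTriangular id := by
    intro i j hij
    simp only [id] at hij
    simp [hLdef, not_le.mpr hij]
  have hLdet : L.det = 1 := by
    rw [Matrix.det_of_upperTriangular hLtri]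
    apply Finset.prod_eq_one
    intro i _
    simp [hLdef]
  have h : Matrix.det M = Matrix.det (M * L) := by rw [Matrix.det_mul, hLdet, mul_one]
  rw [h]
  congr 1
  ext p q
  rw [Matrix.mul_apply]
  simp only [Matrix.of_apply, hLdef, mul_ite, mul_one, mul_zero]

lemma int_one (α β : ℝ) (hab : α ≤ β) : ∫ _ in Set.Icc α β, (1:ℝ) = β - α := by
  simp [Real.volume_Icc, ENNReal.toReal_ofReal (sub_nonneg.mpr hab), hab]

lemma int_sin (c α β : ℝ) (hc : c ≠ 0) (hab : α ≤ β) :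
    ∫ t in Set.Icc α β, Real.sin (c*t) = Real.cos (c*α)/c - Real.cos (c*β)/c := by
  rw [integral_Icc_eq_integral_Ioc, ← intervalIntegral.integral_of_le hab]
  have h : ∀ t ∈ Set.uIcc α β, HasDerivAt (fun u => -(Real.cos (c*u)/c)) (Real.sin (c*t)) t := by
    intro t _
    have h1 : HasDerivAt (fun u : ℝ => c * u) c t := by
      simpa using (hasDerivAt_id t).const_mul c
    have h2 := (Real.hasDerivAt_cos (c*t)).comp t h1
    have h3 := (h2.div_const c).neg
    refine h3.congr_deriv ?_
    field_simp
  rw [intervalIntegral.integral_eq_sub_of_hasDerivAt h]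
  · ring
  · exact (Real.continuous_sin.comp (continuous_const.mul continuous_id)).intervalIntegrable _ _

lemma int_cos_div (c α β : ℝ) (hc : c ≠ 0) (hab : α ≤ β) :
    ∫ t in Set.Icc α β, Real.cos (c*t)/c = Real.sin (c*β)/c^2 - Real.sin (c*α)/c^2 := by
  rw [integral_Icc_eq_integral_Ioc, ← intervalIntegral.integral_of_le hab]
  have h : ∀ t ∈ Set.uIcc α β, HasDerivAt (fun u => Real.sin (c*u)/c^2) (Real.cos (c*t)/c) t := by
    intro t _
    have h1 : HasDerivAt (fun u : ℝ => c * u) c t := by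
      simpa using (hasDerivAt_id t).const_mul c
    have h2 := (Real.hasDerivAt_sin (c*t)).comp t h1
    have h3 := h2.div_const (c^2)
    refine h3.congr_deriv ?_
    field_simp
  rw [intervalIntegral.integral_eq_sub_of_hasDerivAt h]
  exact ((Real.continuous_cos.comp (continuous_const.mul continuous_id)).div_const
    c).intervalIntegrable _ _

lemma sum_ite_le {n m : ℕ} (hm : m < n) (g : ℕ → ℝ) :
    ∑ i ∈ Finset.range n, (if i ≤ m then g i else 0) = ∑ i ∈ Finset.range (m+1), g i := by
  rw [← Finset.sum_subset (Finset.range_subset_range.mpr (by omega : m+1 ≤ n))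
    (fun i _ hi => if_neg (by have := Finset.mem_range.not.mp hi; omega))]
  exact Finset.sum_congr rfl fun i hi => if_pos (by have := Finset.mem_range.mp hi; omega)

end Helpers

/-- **Eigenfunction equation for the `(2k+1)`-strip transfer operator `A∘B`.**
For `j_1 > … > j_k > 0` and `0 ≤ x_1 ≤ … ≤ x_k ≤ 1`, the iterated integral
`∫_{y_1=0}^{x_1} ⋯ ∫_{y_{k+1}=x_k}^{1} [ ∫_{t_1=y_1}^{y_2} ⋯ ∫_{t_k=y_k}^{y_{k+1}}
φ(t) dt ] dy` (the outer integral is over a box since its limits are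
constants; the inner one is over the box `∏ [y_q, y_{q+1}]`) equals
`φ(x) / (π^{2k} j_1² ⋯ j_k²)`. -/
theorem transfer_eigen_2kp1 (k : ℕ) (hk : 1 ≤ k) (jj : Fin k → ℕ)
    (hdec : ∀ p q : Fin k, p < q → jj q < jj p) (hpos : ∀ p, 0 < jj p)
    (x : Fin k → ℝ) (hmono : Monotone x) (h01 : ∀ q, 0 ≤ x q ∧ x q ≤ 1) :
    (∫ y in Set.univ.pi (fun q : Fin (k + 1) =>
        Set.Icc
          (if h : (q : ℕ) = 0 then (0 : ℝ)
            else x ⟨(q : ℕ) - 1, by have := q.isLt; omega⟩)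
          (if h : (q : ℕ) = k then (1 : ℝ)
            else x ⟨(q : ℕ), by have := q.isLt; omega⟩)),
        ∫ t in Set.univ.pi (fun q : Fin k => Set.Icc (y q.castSucc) (y q.succ)),
          phiSin k jj t) =
      (1 / (Real.pi ^ (2 * k) * ∏ p : Fin k, ((jj p : ℝ)) ^ 2)) * phiSin k jj x := by
  classical
  have hπ : (0:ℝ) < Real.pi := Real.pi_pos
  have hc0 : ∀ p : Fin k, Real.pi * (jj p : ℝ) ≠ 0 := fun p =>
    ne_of_gt (mul_pos hπ (by exact_mod_cast hpos p))
  -- the endpoint function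
  set w : ℕ → ℝ := fun i => if _ : i = 0 then (0:ℝ)
    else if h : i ≤ k then x ⟨i-1, by omega⟩ else 1 with hwdef
  have hw0 : w 0 = 0 := by simp [hwdef]
  have hwlast : w (k+1) = 1 := by
    have h1 : ¬ (k+1 = 0) := by omega
    have h2 : ¬ (k+1 ≤ k) := by omega
    simp [hwdef, h1, h2]
  have hwx : ∀ q : Fin k, w ((q:ℕ)+1) = x q := by
    intro q
    have h2 : (q:ℕ)+1 ≤ k := q.isLt
    simp only [hwdef]
    rw [dif_neg (by omega : ¬ ((q:ℕ)+1 = 0)), dif_pos h2]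
    exact congrArg x (Fin.ext (show (q:ℕ)+1-1 = (q:ℕ) by omega))
  have hwq : ∀ q : Fin (k+1), w q ≤ w ((q:ℕ)+1) := by
    intro q
    have hq : (q:ℕ) ≤ k := by have := q.isLt; omega
    by_cases h0 : (q:ℕ) = 0
    · rw [h0, hw0]
      simp only [hwdef]
      rw [dif_neg (by omega : ¬ ((0:ℕ)+1 = 0)), dif_pos (by omega : (0:ℕ)+1 ≤ k)]
      exact (h01 _).1
    · by_cases hik : (q:ℕ) = k
      · rw [hik, hwlast]
        simp only [hwdef]
        rw [dif_neg (by omega : ¬ (k = 0)), dif_pos (le_refl k)]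
        exact (h01 _).2
      · have hik' : (q:ℕ) + 1 ≤ k := by omega
        simp only [hwdef]
        rw [dif_neg h0, dif_pos hq, dif_neg (by omega : ¬ ((q:ℕ)+1 = 0)), dif_pos hik']
        exact hmono (by simp only [Fin.mk_le_mk]; omega)
  -- rewrite the integration region using w
  have hset : (Set.univ.pi (fun q : Fin (k + 1) =>
        Set.Icc
          (if h : (q : ℕ) = 0 then (0 : ℝ)
            else x ⟨(q : ℕ) - 1, by have := q.isLt; omega⟩)
          (if h : (q : ℕ) = k then (1 : ℝ)
            else x ⟨(q : ℕ), by have := q.isLt; omega⟩)))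
      = Set.univ.pi (fun q : Fin (k+1) => Set.Icc (w q) (w ((q:ℕ)+1))) := by
    apply congrArg (Set.pi Set.univ)
    funext q
    have hlow : (if h : (q : ℕ) = 0 then (0 : ℝ)
        else x ⟨(q : ℕ) - 1, by have := q.isLt; omega⟩) = w q := by
      by_cases h0 : (q:ℕ) = 0
      · rw [dif_pos h0, h0, hw0]
      · have hq : (q:ℕ) ≤ k := by have := q.isLt; omega
        rw [dif_neg h0]
        simp only [hwdef]
        rw [dif_neg h0, dif_pos hq]
    have hupp : (if h : (q : ℕ) = k then (1 : ℝ)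
        else x ⟨(q : ℕ), by have := q.isLt; omega⟩) = w ((q:ℕ)+1) := by
      by_cases hqk : (q:ℕ) = k
      · rw [dif_pos hqk, hqk]
        exact hwlast.symm
      · have h2 : (q:ℕ)+1 ≤ k := by have := q.isLt; omega
        rw [dif_neg hqk]
        simp only [hwdef]
        rw [dif_neg (by omega : ¬ ((q:ℕ)+1 = 0)), dif_pos h2]
        exact congrArg x (Fin.ext (show (q:ℕ) = (q:ℕ)+1-1 by omega))
    rw [hlow, hupp]
  rw [hset]
  -- the cosine matrix
  set Mmat : (Fin (k+1) → ℝ) → Matrix (Fin (k+1)) (Fin (k+1)) ℝ := fun y =>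
    Matrix.of fun p q => Fin.cases (1:ℝ)
      (fun p' => Real.cos (Real.pi * (jj p' : ℝ) * y q) / (Real.pi * (jj p' : ℝ))) p
    with hMdef
  -- Step 1: evaluate the inner integral on the region
  have hInner : ∀ y ∈ Set.univ.pi (fun q : Fin (k+1) => Set.Icc (w q) (w ((q:ℕ)+1))),
      (∫ t in Set.univ.pi (fun q : Fin k => Set.Icc (y q.castSucc) (y q.succ)), phiSin k jj t)
      = Real.sqrt 2 ^ k * ((-1:ℝ)^k * (Mmat y).det) := by
    intro y hy
    have hyord : ∀ q : Fin k, y q.castSucc ≤ y q.succ := by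
      intro q
      have h1 := (hy q.castSucc (Set.mem_univ _)).2
      have h2 := (hy q.succ (Set.mem_univ _)).1
      simp only [Fin.coe_castSucc, Fin.val_succ] at h1 h2
      exact le_trans h1 h2
    simp only [phiSin]
    rw [integral_const_mul]
    congr 1
    have hbd : (∫ t in Set.univ.pi (fun q : Fin k => Set.Icc (y q.castSucc) (y q.succ)),
        Matrix.det (Matrix.of fun p q : Fin k => Real.sin (Real.pi * (jj p:ℝ) * t q)))
        = Matrix.det (Matrix.of fun p q : Fin k =>
            ∫ t in Set.Icc (y q.castSucc) (y q.succ), Real.sin (Real.pi * (jj p:ℝ) * t)) :=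
      box_det _ _ (fun q t p => Real.sin (Real.pi * (jj p:ℝ) * t)) (fun q p => by fun_prop)
    rw [hbd]
    have hentry : (Matrix.of fun p q : Fin k =>
          ∫ t in Set.Icc (y q.castSucc) (y q.succ), Real.sin (Real.pi * (jj p:ℝ) * t))
        = Matrix.of (fun p q : Fin k => (Mmat y) p.succ q.castSucc - (Mmat y) p.succ q.succ) := by
      ext p q
      simp only [Matrix.of_apply, hMdef, Fin.cases_succ]
      exact int_sin _ _ _ (hc0 p) (hyord q)
    rw [hentry]
    rw [det_diff_cols (Mmat y) (fun q => by simp [hMdef])]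
    have h11 : (-1:ℝ)^k * (-1)^k = 1 := by
      rw [← pow_add]
      exact Even.neg_one_pow ⟨k, rfl⟩
    rw [← mul_assoc, h11, one_mul]
  rw [setIntegral_congr_fun (MeasurableSet.univ_pi fun q => measurableSet_Icc) hInner]
  rw [integral_const_mul, integral_const_mul]
  -- Step 2: evaluate the outer integral
  have hbd2 : (∫ y in Set.univ.pi (fun q : Fin (k+1) => Set.Icc (w q) (w ((q:ℕ)+1))),
        (Mmat y).det)
      = Matrix.det (Matrix.of fun p q : Fin (k+1) =>
          ∫ t in Set.Icc (w q) (w ((q:ℕ)+1)),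
            (Fin.cases (1:ℝ)
              (fun p' => Real.cos (Real.pi * (jj p' : ℝ) * t) / (Real.pi * (jj p' : ℝ))) p)) := by
    exact box_det (fun q => w q) (fun q => w ((q:ℕ)+1))
      (fun q t p => Fin.cases (1:ℝ)
        (fun p' => Real.cos (Real.pi * (jj p' : ℝ) * t) / (Real.pi * (jj p' : ℝ))) p)
      (fun q p => by
        refine Fin.cases ?_ ?_ p
        · simpa using continuous_const
        · intro p'
          simp only [Fin.cases_succ]
          fun_prop)
  rw [hbd2]
  -- Step 3: compute the entries of the integrated matrix
  set Qmat : Matrix (Fin (k+1)) (Fin (k+1)) ℝ := Matrix.of fun p q =>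
    Fin.cases (w ((q:ℕ)+1) - w q)
      (fun p' => Real.sin (Real.pi * (jj p':ℝ) * w ((q:ℕ)+1)) / (Real.pi * (jj p':ℝ))^2
        - Real.sin (Real.pi * (jj p':ℝ) * w q) / (Real.pi * (jj p':ℝ))^2) p with hQdef
  have hQ : (Matrix.of fun p q : Fin (k+1) =>
        ∫ t in Set.Icc (w q) (w ((q:ℕ)+1)),
          (Fin.cases (1:ℝ)
            (fun p' => Real.cos (Real.pi * (jj p' : ℝ) * t) / (Real.pi * (jj p' : ℝ))) p))
      = Qmat := by
    ext p q
    simp only [Matrix.of_apply, hQdef]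
    refine Fin.cases ?_ ?_ p
    · simp only [Fin.cases_zero]
      exact int_one _ _ (hwq q)
    · intro p'
      simp only [Fin.cases_succ]
      exact int_cos_div _ _ _ (hc0 p') (hwq q)
  rw [hQ, det_accum Qmat]
  -- Step 4: the accumulated matrix
  set Pmat : Matrix (Fin (k+1)) (Fin (k+1)) ℝ := Matrix.of fun p q =>
    Fin.cases (w ((q:ℕ)+1))
      (fun p' => Real.sin (Real.pi * (jj p':ℝ) * w ((q:ℕ)+1)) / (Real.pi * (jj p':ℝ))^2) p
    with hPdef
  have hP : (Matrix.of fun p q : Fin (k+1) => ∑ s : Fin (k+1), if s ≤ q then Qmat p s else 0)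
      = Pmat := by
    ext p q
    simp only [Matrix.of_apply, hQdef, hPdef]
    refine Fin.cases ?_ ?_ p
    · simp only [Fin.cases_zero, Fin.le_def]
      calc ∑ s : Fin (k+1), (if (s:ℕ) ≤ (q:ℕ) then w ((s:ℕ)+1) - w (s:ℕ) else 0)
          = ∑ i ∈ Finset.range (k+1), (if i ≤ (q:ℕ) then w (i+1) - w i else 0) :=
            Fin.sum_univ_eq_sum_range (fun i => if i ≤ (q:ℕ) then w (i+1) - w i else 0) (k+1)
        _ = ∑ i ∈ Finset.range ((q:ℕ)+1), (w (i+1) - w i) := sum_ite_le q.isLt _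
        _ = w ((q:ℕ)+1) - w 0 := Finset.sum_range_sub w _
        _ = w ((q:ℕ)+1) := by rw [hw0, sub_zero]
    · intro p'
      simp only [Fin.cases_succ, Fin.le_def]
      calc ∑ s : Fin (k+1), (if (s:ℕ) ≤ (q:ℕ) then
              Real.sin (Real.pi * (jj p':ℝ) * w ((s:ℕ)+1)) / (Real.pi * (jj p':ℝ))^2
              - Real.sin (Real.pi * (jj p':ℝ) * w (s:ℕ)) / (Real.pi * (jj p':ℝ))^2 else 0)
          = ∑ i ∈ Finset.range (k+1), (if i ≤ (q:ℕ) then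
              Real.sin (Real.pi * (jj p':ℝ) * w (i+1)) / (Real.pi * (jj p':ℝ))^2
              - Real.sin (Real.pi * (jj p':ℝ) * w i) / (Real.pi * (jj p':ℝ))^2 else 0) :=
            Fin.sum_univ_eq_sum_range (fun i => if i ≤ (q:ℕ) then
              Real.sin (Real.pi * (jj p':ℝ) * w (i+1)) / (Real.pi * (jj p':ℝ))^2
              - Real.sin (Real.pi * (jj p':ℝ) * w i) / (Real.pi * (jj p':ℝ))^2 else 0) (k+1)
        _ = ∑ i ∈ Finset.range ((q:ℕ)+1),
              (Real.sin (Real.pi * (jj p':ℝ) * w (i+1)) / (Real.pi * (jj p':ℝ))^2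
              - Real.sin (Real.pi * (jj p':ℝ) * w i) / (Real.pi * (jj p':ℝ))^2) :=
            sum_ite_le q.isLt _
        _ = Real.sin (Real.pi * (jj p':ℝ) * w ((q:ℕ)+1)) / (Real.pi * (jj p':ℝ))^2
              - Real.sin (Real.pi * (jj p':ℝ) * w 0) / (Real.pi * (jj p':ℝ))^2 :=
            Finset.sum_range_sub (fun i =>
              Real.sin (Real.pi * (jj p':ℝ) * w i) / (Real.pi * (jj p':ℝ))^2) _
        _ = Real.sin (Real.pi * (jj p':ℝ) * w ((q:ℕ)+1)) / (Real.pi * (jj p':ℝ))^2 := by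
            rw [hw0]
            simp
  rw [hP]
  -- Step 5: expand along the last column
  rw [Matrix.det_succ_column Pmat (Fin.last k)]
  rw [Finset.sum_eq_single 0]
  · have hPlast : Pmat 0 (Fin.last k) = 1 := by
      simp [hPdef, Fin.val_last, hwlast]
    have hsub : Pmat.submatrix (Fin.succAbove 0) (Fin.succAbove (Fin.last k))
        = Matrix.of (fun p q : Fin k => ((Real.pi * (jj p:ℝ))^2)⁻¹ *
            (Matrix.of fun p q : Fin k => Real.sin (Real.pi * (jj p : ℝ) * x q)) p q) := by
      ext p q
      rw [Matrix.submatrix_apply, Fin.succAbove_zero, Fin.succAbove_last]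
      simp only [hPdef, Matrix.of_apply, Fin.cases_succ, Fin.coe_castSucc]
      rw [hwx q, div_eq_inv_mul]
    rw [hPlast, hsub, Matrix.det_mul_column]
    have hprodinv : (∏ p : Fin k, ((Real.pi * (jj p:ℝ))^2)⁻¹)
        = (Real.pi^(2*k) * ∏ p : Fin k, (jj p:ℝ)^2)⁻¹ := by
      rw [Finset.prod_inv_distrib]
      congr 1
      simp_rw [mul_pow]
      rw [Finset.prod_mul_distrib, Finset.prod_const, Finset.card_univ, Fintype.card_fin,
        ← pow_mul]
    simp only [phiSin, Fin.val_zero, Fin.val_last, zero_add, mul_one]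
    rw [hprodinv, one_div]
    set D := Matrix.det (Matrix.of fun p q : Fin k => Real.sin (Real.pi * (jj p : ℝ) * x q))
      with hD
    have h11 : (-1:ℝ)^k * (-1)^k = 1 := by
      rw [← pow_add]
      exact Even.neg_one_pow ⟨k, rfl⟩
    linear_combination (Real.sqrt 2 ^ k *
      (Real.pi ^ (2*k) * ∏ p : Fin k, (jj p:ℝ)^2)⁻¹ * D) * h11
  · intro i _ hi
    rcases Fin.eq_zero_or_eq_succ i with rfl | ⟨p', rfl⟩
    · exact absurd rfl hi
    · have : Pmat p'.succ (Fin.last k) = 0 := by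
        simp only [hPdef, Matrix.of_apply, Fin.cases_succ, Fin.val_last, hwlast, mul_one]
        rw [mul_comm Real.pi, Real.sin_nat_mul_pi, zero_div]
      rw [this, mul_zero, zero_mul]
  · intro h
    exact absurd (Finset.mem_univ _) h
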